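/- Define W(x) := ((n−2)·A x·B x + 2·A' x·(C₂ x − n·C₁ x))/((n−2)·(A x)²) + ((n²−5)·(C₂ x)² − 4·(C₁ x)² + 2·(4 + n − n²)·C₁ x·C₂ x)/((n−2)·(n−1)·(A x)²) and W_J(x) := exp(−(n−2)·α x)·A x·W(x), the square of the integrand of the invariant I_J^n of eq. (i4). Let W̄_J be given by the same formula with (A, B, C₁, C₂, α) replaced by the transformed coefficients (Ā, B̄, C̄₁, C̄₂, ᾱ) and A' replaced by the derivative of Ā. If A(x) ≠ 0 for all x, then for every transformation datum one has W̄_J(f x)·(f' x)² = W_J(x) for all x ∈ ℝ, so the integral invariant I_J^n = ∫√(±W_J) dΦ is (up to an additive constant) invariant under the conformal–almost-geodesic frame transformations. -/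
import Mathlib


/-- Transformation rule (t1) for the non-minimal coupling coefficient `A`:
`Ā(f x) = exp(−(n−2)·γ₁ x)·A x`. -/
noncomputable def transA (n : ℕ) (f : ℝ ≃ ℝ) (γ₁ A : ℝ → ℝ) : ℝ → ℝ :=
  fun y => Real.exp (-((n : ℝ) - 2) * γ₁ (f.symm y)) * A (f.symm y)

/-- Transformation rule (t3) for the coefficient `C₁`:
`C̄₁(f x)·f' x = exp(−(n−2)·γ₁ x)·(C₁ x + A x·((n−1)/2·γ₂' x + (n−3)/2·γ₃' x))`. -/
noncomputable def transC1 (n : ℕ) (f : ℝ ≃ ℝ) (γ₁ γ₂ γ₃ A C₁ : ℝ → ℝ) : ℝ → ℝ :=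
  fun y => Real.exp (-((n : ℝ) - 2) * γ₁ (f.symm y)) *
    (C₁ (f.symm y) + A (f.symm y) *
      (((n : ℝ) - 1) / 2 * deriv γ₂ (f.symm y) + ((n : ℝ) - 3) / 2 * deriv γ₃ (f.symm y)))
    / deriv (⇑f) (f.symm y)

/-- Transformation rule (t4) for the coefficient `C₂`:
`C̄₂(f x)·f' x = exp(−(n−2)·γ₁ x)·(C₂ x + A x·((n−1)·γ₂' x − γ₃' x))`. -/
noncomputable def transC2 (n : ℕ) (f : ℝ ≃ ℝ) (γ₁ γ₂ γ₃ A C₂ : ℝ → ℝ) : ℝ → ℝ :=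
  fun y => Real.exp (-((n : ℝ) - 2) * γ₁ (f.symm y)) *
    (C₂ (f.symm y) + A (f.symm y) *
      (((n : ℝ) - 1) * deriv γ₂ (f.symm y) - deriv γ₃ (f.symm y)))
    / deriv (⇑f) (f.symm y)

/-- Transformation rule (t2) for the kinetic coupling `B`:
`B̄(f x)·(f' x)² = exp(−(n−2)·γ₁ x)·( B x
  + (n−1)·( n·A·γ₂'·γ₃' − A·(γ₂')² − A·(γ₃')² + A'·(γ₂' + γ₃') − (n−2)·A·γ₁'·(γ₂' + γ₃') )
  + C₁·( −2n·γ₁' + 2(n+1)·γ₂' − 2·γ₃' ) + C₂·( 2·γ₁' − (n+3)·γ₂' + (n+1)·γ₃' ) )`. -/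
noncomputable def transB (n : ℕ) (f : ℝ ≃ ℝ) (γ₁ γ₂ γ₃ A B C₁ C₂ : ℝ → ℝ) : ℝ → ℝ :=
  fun y =>
    Real.exp (-((n : ℝ) - 2) * γ₁ (f.symm y)) *
      (B (f.symm y)
        + ((n : ℝ) - 1) *
          ((n : ℝ) * A (f.symm y) * deriv γ₂ (f.symm y) * deriv γ₃ (f.symm y)
            - A (f.symm y) * (deriv γ₂ (f.symm y)) ^ 2
            - A (f.symm y) * (deriv γ₃ (f.symm y)) ^ 2
            + deriv A (f.symm y) * (deriv γ₂ (f.symm y) + deriv γ₃ (f.symm y))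
            - ((n : ℝ) - 2) * A (f.symm y) * deriv γ₁ (f.symm y)
              * (deriv γ₂ (f.symm y) + deriv γ₃ (f.symm y)))
        + C₁ (f.symm y) * (-(2 * (n : ℝ)) * deriv γ₁ (f.symm y)
            + 2 * ((n : ℝ) + 1) * deriv γ₂ (f.symm y) - 2 * deriv γ₃ (f.symm y))
        + C₂ (f.symm y) * (2 * deriv γ₁ (f.symm y)
            - ((n : ℝ) + 3) * deriv γ₂ (f.symm y) + ((n : ℝ) + 1) * deriv γ₃ (f.symm y)))
      / (deriv (⇑f) (f.symm y)) ^ 2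

/-- Transformation rule (t6) for the anomalous matter-coupling coefficient `α`:
`ᾱ(f x) = α x − γ₁ x`. -/
def transAlpha (f : ℝ ≃ ℝ) (γ₁ α : ℝ → ℝ) : ℝ → ℝ :=
  fun y => α (f.symm y) - γ₁ (f.symm y)

/-- The quantity `W`, the square of the integrand of the invariant `I_E^n`:
`W = ((n−2)·A·B + 2·A'·(C₂ − n·C₁))/((n−2)·A²)
   + ((n²−5)·C₂² − 4·C₁² + 2·(4 + n − n²)·C₁·C₂)/((n−2)·(n−1)·A²)`. -/
noncomputable def Wsq (n : ℕ) (A B C₁ C₂ : ℝ → ℝ) (x : ℝ) : ℝ :=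
  (((n : ℝ) - 2) * A x * B x + 2 * deriv A x * (C₂ x - (n : ℝ) * C₁ x))
      / (((n : ℝ) - 2) * (A x) ^ 2)
    + (((n : ℝ) ^ 2 - 5) * (C₂ x) ^ 2 - 4 * (C₁ x) ^ 2
        + 2 * (4 + (n : ℝ) - (n : ℝ) ^ 2) * C₁ x * C₂ x)
      / (((n : ℝ) - 2) * ((n : ℝ) - 1) * (A x) ^ 2)

/-- The square `W_J := exp(−(n−2)·α)·A·W` of the integrand of the integral
invariant `I_J^n` of eq. (i4). -/
noncomputable def WsqJ (n : ℕ) (A B C₁ C₂ α : ℝ → ℝ) (x : ℝ) : ℝ :=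
  Real.exp (-((n : ℝ) - 2) * α x) * A x * Wsq n A B C₁ C₂ x

set_option maxHeartbeats 4000000 in
/-- The square `W_J` of the integrand of the invariant `I_J^n` (eq. (i4))
transforms as a density of weight two in the scalar field:
`W̄_J(f x)·(f' x)² = W_J(x)` for all `x`, where `W̄_J` is formed from the
transformed coefficients `(Ā, B̄, C̄₁, C̄₂, ᾱ)`. Hence the integral invariant
`I_J^n = ∫√(±W_J) dΦ` is (up to an additive constant) invariant under the
conformal–almost-geodesic frame transformations. -/
theorem WsqJ_weight_two (n : ℕ) (hn : 3 ≤ n)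
    (f : ℝ ≃ ℝ) (γ₁ γ₂ γ₃ : ℝ → ℝ)
    (hf : Differentiable ℝ ⇑f) (hf' : ∀ x, deriv (⇑f) x ≠ 0)
    (hfsymm : Differentiable ℝ ⇑f.symm)
    (hγ₁ : Differentiable ℝ γ₁) (hγ₂ : Differentiable ℝ γ₂) (hγ₃ : Differentiable ℝ γ₃)
    (A B C₁ C₂ α : ℝ → ℝ) (hA : Differentiable ℝ A) (hA0 : ∀ x, A x ≠ 0) :
    ∀ x, WsqJ n (transA n f γ₁ A) (transB n f γ₁ γ₂ γ₃ A B C₁ C₂)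
          (transC1 n f γ₁ γ₂ γ₃ A C₁) (transC2 n f γ₁ γ₂ γ₃ A C₂)
          (transAlpha f γ₁ α) (f x)
        * (deriv (⇑f) x) ^ 2
      = WsqJ n A B C₁ C₂ α x := by

  intro x
  have hx : f.symm (f x) = x := f.symm_apply_apply x
  have hn2 : ((n : ℝ) - 2) ≠ 0 := by
    have : (3:ℝ) ≤ (n:ℝ) := by exact_mod_cast hn
    linarith
  have hn1 : ((n : ℝ) - 1) ≠ 0 := by
    have : (3:ℝ) ≤ (n:ℝ) := by exact_mod_cast hn
    linarith
  -- derivative of the inverse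
  have key : deriv (⇑f.symm) (f x) * deriv (⇑f) x = 1 := by
    have h1 : HasDerivAt (⇑f.symm ∘ ⇑f) (deriv (⇑f.symm) (f x) * deriv (⇑f) x) x :=
      ((hfsymm (f x)).hasDerivAt).comp x (hf x).hasDerivAt
    have h2 : (⇑f.symm ∘ ⇑f) = id := by funext y; simp
    rw [h2] at h1
    exact h1.unique (hasDerivAt_id x)
  have hsinv : deriv (⇑f.symm) (f x) = (deriv (⇑f) x)⁻¹ := by
    field_simp [hf' x]
    linarith [key]
  -- derivative of transA at f x
  have hg : ∀ y : ℝ, HasDerivAt (fun t => Real.exp (-((n : ℝ) - 2) * γ₁ t) * A t)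
      (Real.exp (-((n : ℝ) - 2) * γ₁ y) * (-((n : ℝ) - 2) * deriv γ₁ y) * A y
        + Real.exp (-((n : ℝ) - 2) * γ₁ y) * deriv A y) y := by
    intro y
    exact (((hγ₁ y).hasDerivAt.const_mul (-((n : ℝ) - 2))).exp).mul (hA y).hasDerivAt
  have hderiv : deriv (transA n f γ₁ A) (f x)
      = (Real.exp (-((n : ℝ) - 2) * γ₁ x) * (-((n : ℝ) - 2) * deriv γ₁ x) * A x
          + Real.exp (-((n : ℝ) - 2) * γ₁ x) * deriv A x) * (deriv (⇑f) x)⁻¹ := by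
    have h := (hg (f.symm (f x))).comp (f x) (hfsymm (f x)).hasDerivAt
    have h' := h.deriv
    rw [hx] at h'
    rw [← hsinv]
    exact h'
  simp only [WsqJ, Wsq]
  rw [hderiv]
  simp only [transA, transB, transC1, transC2, transAlpha, hx]
  rw [show -((n : ℝ) - 2) * (α x - γ₁ x)
      = (-((n : ℝ) - 2) * α x) - (-((n : ℝ) - 2) * γ₁ x) by ring, Real.exp_sub]
  have hE : Real.exp (-((n : ℝ) - 2) * γ₁ x) ≠ 0 := Real.exp_ne_zero _
  have hA0x := hA0 x
  have hfx := hf' x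
  field_simp
  ring
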